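/- Derivation is sound for the existential suffix implication: for all a ∈ D and infinite words w, a·w satisfies R ⟨ φ (existential suffix implication) if and only if (a ∈ L(R) and a·w satisfies φ) or w satisfies leaf(δ(R),a) ⟨ φ; where a·w ⊨ R ⟨ φ means there exist a finite word u and infinite word v with a·w = u·v, u·v(0) ∈ L(R), and v ⊨ φ. -/

import Mathlib

open Classical

/-- An effective Boolean algebra over a domain `D` with predicates `P`. -/
structure EBA (D : Type*) (P : Type*) where
  den : P → Set D
  bot : P
  top : P
  band : P → P → P
  bor : P → P → P
  bnot : P → P
  den_bot : den bot = ∅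
  den_top : den top = Set.univ
  den_and : ∀ α β, den (band α β) = den α ∩ den β
  den_or : ∀ α β, den (bor α β) = den α ∪ den β
  den_not : ∀ α, den (bnot α) = (den α)ᶜ

/-- Transition terms over predicates `P` with leaves in `Φ`:
nested if-then-else expressions. -/
inductive TT (P : Type*) (Φ : Type*) where
  | leaf : Φ → TT P Φ
  | ite : P → TT P Φ → TT P Φ → TT P Φ

/-- The leaf of a transition term for an element `a` of the domain. -/
noncomputable def leafOf {D P Φ : Type*} (E : EBA D P) : TT P Φ → D → Φ
  | .leaf φ, _ => φ
  | .ite α f g, a => if a ∈ E.den α then leafOf E f a else leafOf E g a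

/-- Lifting of a binary operation on leaves to transition terms. -/
def liftBin {P Φ Φ' : Type*} (op : Φ → Φ → Φ') : TT P Φ → TT P Φ → TT P Φ'
  | .ite α f g, h => .ite α (liftBin op f h) (liftBin op g h)
  | .leaf φ, .ite α f g => .ite α (liftBin op (.leaf φ) f) (liftBin op (.leaf φ) g)
  | .leaf φ, .leaf ψ => .leaf (op φ ψ)

/-- Lifting of a unary operation on leaves to transition terms. -/
def liftUn {P Φ Φ' : Type*} (op : Φ → Φ') : TT P Φ → TT P Φ'
  | .leaf φ => .leaf (op φ)
  | .ite α f g => .ite α (liftUn op f) (liftUn op g)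

/-- Extended regular expressions modulo an algebra of predicates `P`. -/
inductive ERE (P : Type*) where
  | pred : P → ERE P
  | eps : ERE P
  | union : ERE P → ERE P → ERE P
  | inter : ERE P → ERE P → ERE P
  | concat : ERE P → ERE P → ERE P
  | star : ERE P → ERE P
  | compl : ERE P → ERE P

/-- The finite-word language of an extended regular expression, where
`den` is the denotation function of the predicate algebra. -/
def lang {D P : Type*} (den : P → Set D) : ERE P → Set (List D)
  | .pred α => {u | ∃ a ∈ den α, u = [a]}
  | .eps => {[]}
  | .union r s => lang den r ∪ lang den s
  | .inter r s => lang den r ∩ lang den s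
  | .concat r s => {u | ∃ x ∈ lang den r, ∃ y ∈ lang den s, u = x ++ y}
  | .star r => {u | ∃ L : List (List D), (∀ x ∈ L, x ∈ lang den r) ∧ u = L.flatten}
  | .compl r => (lang den r)ᶜ

/-- Nullability of an extended regular expression. -/
def nullable {P : Type*} : ERE P → Bool
  | .pred _ => false
  | .eps => true
  | .union r s => nullable r || nullable s
  | .inter r s => nullable r && nullable s
  | .concat r s => nullable r && nullable s
  | .star _ => true
  | .compl r => !nullable r

/-- The symbolic derivative of an extended regular expression:
a transition term with regex leaves. -/
noncomputable def derive {D P : Type*} (E : EBA D P) : ERE P → TT P (ERE P)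
  | .eps => .leaf (.pred E.bot)
  | .pred α => .ite α (.leaf .eps) (.leaf (.pred E.bot))
  | .union r s => liftBin ERE.union (derive E r) (derive E s)
  | .inter r s => liftBin ERE.inter (derive E r) (derive E s)
  | .compl r => liftUn ERE.compl (derive E r)
  | .star r => liftUn (fun t => ERE.concat t (.star r)) (derive E r)
  | .concat r s =>
    if nullable r then
      liftBin ERE.union (liftUn (fun t => ERE.concat t s) (derive E r)) (derive E s)
    else liftUn (fun t => ERE.concat t s) (derive E r)

/-- The `n`-th suffix of an infinite word. -/
def suffix {D : Type*} (w : ℕ → D) (n : ℕ) : ℕ → D := fun i => w (n + i)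

/-- Prepending an element to an infinite word. -/
def consInf {D : Type*} (a : D) (v : ℕ → D) : ℕ → D :=
  fun i => match i with
  | 0 => a
  | n + 1 => v n

/-- Prepending a finite word to an infinite word. -/
def appendInf {D : Type*} : List D → (ℕ → D) → ℕ → D
  | [], v => v
  | a :: u, v => consInf a (appendInf u v)

/-- RLTL modulo `A`: LTL extended with the existential suffix
implication `R ⟨ φ` over extended regular expressions. -/
inductive RLTL (P : Type*) where
  | pred : P → RLTL P
  | not : RLTL P → RLTL P
  | or : RLTL P → RLTL P → RLTL P
  | and : RLTL P → RLTL P → RLTL P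
  | next : RLTL P → RLTL P
  | untl : RLTL P → RLTL P → RLTL P
  | release : RLTL P → RLTL P → RLTL P
  | eimpl : ERE P → RLTL P → RLTL P

/-- Semantics of RLTL over infinite words. -/
def RLTLsat {D P : Type*} (den : P → Set D) : (ℕ → D) → RLTL P → Prop
  | w, .pred α => w 0 ∈ den α
  | w, .not φ => ¬ RLTLsat den w φ
  | w, .or φ ψ => RLTLsat den w φ ∨ RLTLsat den w ψ
  | w, .and φ ψ => RLTLsat den w φ ∧ RLTLsat den w ψ
  | w, .next φ => RLTLsat den (suffix w 1) φ
  | w, .untl φ ψ => ∃ j, RLTLsat den (suffix w j) ψ ∧ ∀ i < j, RLTLsat den (suffix w i) φ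
  | w, .release φ ψ => (∀ j, RLTLsat den (suffix w j) ψ) ∨
      ∃ j, RLTLsat den (suffix w j) φ ∧ ∀ i ≤ j, RLTLsat den (suffix w i) ψ
  | w, .eimpl R φ => ∃ (u : List D) (v : ℕ → D),
      w = appendInf u v ∧ (u ++ [v 0]) ∈ lang den R ∧ RLTLsat den v φ

@[simp] lemma leafOf_leaf {D P Φ : Type*} (E : EBA D P) (φ : Φ) (a : D) :
    leafOf E (.leaf φ) a = φ := rfl

@[simp] lemma leafOf_ite {D P Φ : Type*} (E : EBA D P) (α : P)
    (f g : TT P Φ) (a : D) :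
    leafOf E (.ite α f g) a
      = if a ∈ E.den α then leafOf E f a else leafOf E g a := rfl

lemma leafOf_liftBin {D P Φ Φ' : Type*} (E : EBA D P) (op : Φ → Φ → Φ')
    (f g : TT P Φ) (a : D) :
    leafOf E (liftBin op f g) a = op (leafOf E f a) (leafOf E g a) := by
  induction f generalizing g with
  | leaf φ =>
    induction g with
    | leaf ψ => simp [liftBin]
    | ite α g h ihg ihh =>
      simp only [liftBin, leafOf_ite]
      split
      · rw [ihg]
      · rw [ihh]
  | ite α f g ihf ihg =>
    simp only [liftBin, leafOf_ite]
    split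
    · rw [ihf]
    · rw [ihg]

lemma leafOf_liftUn {D P Φ Φ' : Type*} (E : EBA D P) (op : Φ → Φ')
    (f : TT P Φ) (a : D) :
    leafOf E (liftUn op f) a = op (leafOf E f a) := by
  induction f with
  | leaf φ => simp [liftUn]
  | ite α f g ihf ihg =>
    simp only [liftUn, leafOf_ite]
    split
    · rw [ihf]
    · rw [ihg]

lemma mem_concat {D P : Type*} {den : P → Set D} {r s : ERE P} {u : List D} :
    u ∈ lang den (.concat r s)
      ↔ ∃ x ∈ lang den r, ∃ y ∈ lang den s, u = x ++ y := Iff.rfl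

lemma nullable_iff {D P : Type*} (den : P → Set D) :
    ∀ r : ERE P, nullable r = true ↔ [] ∈ lang den r
  | .pred α => by simp [nullable, lang]
  | .eps => by simp [nullable, lang]
  | .union r s => by
      simp [nullable, lang, nullable_iff den r, nullable_iff den s]
  | .inter r s => by
      simp [nullable, lang, nullable_iff den r, nullable_iff den s]
  | .concat r s => by
      simp only [nullable, Bool.and_eq_true, nullable_iff den r,
        nullable_iff den s, mem_concat]
      constructor
      · rintro ⟨h1, h2⟩; exact ⟨[], h1, [], h2, rfl⟩
      · rintro ⟨x, hx, y, hy, hxy⟩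
        rcases List.append_eq_nil_iff.mp hxy.symm with ⟨rfl, rfl⟩
        exact ⟨hx, hy⟩
  | .star r => by
      simp only [nullable, lang, Set.mem_setOf_eq, true_iff]
      exact ⟨[], by simp, rfl⟩
  | .compl r => by
      have h := nullable_iff den r
      simp only [nullable, lang, Bool.not_eq_true', Set.mem_compl_iff, ← h]
      cases nullable r <;> simp

lemma star_cons {D P : Type*} (den : P → Set D) (r : ERE P) (a : D) (x : List D) :
    (a :: x) ∈ lang den (.star r) ↔
      ∃ y z, (a :: y) ∈ lang den r ∧ z ∈ lang den (.star r) ∧ x = y ++ z := by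
  constructor
  · rintro ⟨L, hL, hflat⟩
    induction L with
    | nil => simp at hflat
    | cons hd tl ih =>
      rcases hd with _ | ⟨b, y⟩
      · exact ih (fun u hu => hL u (by simp [hu])) (by simpa using hflat)
      · simp only [List.flatten_cons, List.cons_append] at hflat
        injection hflat with h1 h2
        subst h1; subst h2
        exact ⟨y, tl.flatten, hL _ (by simp),
          ⟨tl, fun u hu => hL u (by simp [hu]), rfl⟩, rfl⟩
  · rintro ⟨y, z, hy, ⟨L, hL, rfl⟩, rfl⟩
    refine ⟨(a :: y) :: L, ?_, by simp⟩
    intro u hu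
    rcases List.mem_cons.mp hu with rfl | hu
    · exact hy
    · exact hL u hu

lemma derive_correct {D P : Type*} (E : EBA D P) (a : D) :
    ∀ (R : ERE P) (x : List D),
    x ∈ lang E.den (leafOf E (derive E R) a) ↔ (a :: x) ∈ lang E.den R
  | .pred α, x => by
      simp only [derive, leafOf_ite, leafOf_leaf]
      by_cases h : a ∈ E.den α
      · simp only [if_pos h, lang, Set.mem_singleton_iff, Set.mem_setOf_eq]
        constructor
        · rintro rfl; exact ⟨a, h, rfl⟩
        · rintro ⟨b, hb, heq⟩
          simp only [List.cons_eq_cons] at heq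
          exact heq.2
      · simp only [if_neg h, lang, E.den_bot, Set.mem_setOf_eq]
        constructor
        · rintro ⟨b, hb, _⟩; exact absurd hb (Set.notMem_empty b)
        · rintro ⟨b, hb, heq⟩
          simp only [List.cons_eq_cons] at heq
          exact absurd (heq.1 ▸ hb) h
  | .eps, x => by simp [derive, lang, E.den_bot]
  | .union r s, x => by
      simp [derive, leafOf_liftBin, lang, derive_correct E a r x,
        derive_correct E a s x]
  | .inter r s, x => by
      simp [derive, leafOf_liftBin, lang, derive_correct E a r x,
        derive_correct E a s x]
  | .compl r, x => by
      simp [derive, leafOf_liftUn, lang, derive_correct E a r x]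
  | .star r, x => by
      have hl : leafOf E (derive E (.star r)) a
          = ERE.concat (leafOf E (derive E r) a) (.star r) := by
        simp [derive, leafOf_liftUn]
      rw [hl, mem_concat, star_cons]
      constructor
      · rintro ⟨y, hy, z, hz, rfl⟩
        exact ⟨y, z, (derive_correct E a r y).mp hy, hz, rfl⟩
      · rintro ⟨y, z, hy, hz, rfl⟩
        exact ⟨y, (derive_correct E a r y).mpr hy, z, hz, rfl⟩
  | .concat r s, x => by
      by_cases hn : nullable r
      · have hl : leafOf E (derive E (.concat r s)) a
            = ERE.union (ERE.concat (leafOf E (derive E r) a) s)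
                (leafOf E (derive E s) a) := by
          simp [derive, hn, leafOf_liftBin, leafOf_liftUn]
        rw [hl]
        show _ ∈ _ ∪ _ ↔ _
        rw [Set.mem_union, mem_concat, mem_concat]
        constructor
        · rintro (⟨y, hy, z, hz, rfl⟩ | hx)
          · exact ⟨a :: y, (derive_correct E a r y).mp hy, z, hz, rfl⟩
          · exact ⟨[], (nullable_iff E.den r).mp hn, a :: x,
              (derive_correct E a s x).mp hx, rfl⟩
        · rintro ⟨u, hu, z, hz, huz⟩
          rcases u with _ | ⟨b, y⟩
          · right
            simp only [List.nil_append] at huz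
            subst huz
            exact (derive_correct E a s x).mpr hz
          · left
            simp only [List.cons_append] at huz
            injection huz with h1 h2
            subst h1; subst h2
            exact ⟨y, (derive_correct E a r y).mpr hu, z, hz, rfl⟩
      · have hl : leafOf E (derive E (.concat r s)) a
            = ERE.concat (leafOf E (derive E r) a) s := by
          simp [derive, hn, leafOf_liftUn]
        rw [hl, mem_concat, mem_concat]
        constructor
        · rintro ⟨y, hy, z, hz, rfl⟩
          exact ⟨a :: y, (derive_correct E a r y).mp hy, z, hz, rfl⟩
        · rintro ⟨u, hu, z, hz, huz⟩
          rcases u with _ | ⟨b, y⟩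
          · exact absurd ((nullable_iff E.den r).mpr hu) hn
          · simp only [List.cons_append] at huz
            injection huz with h1 h2
            subst h1; subst h2
            exact ⟨y, (derive_correct E a r y).mpr hu, z, hz, rfl⟩

lemma consInf_inj {D : Type*} {a b : D} {w v : ℕ → D}
    (h : consInf a w = consInf b v) : a = b ∧ w = v := by
  constructor
  · exact congrFun h 0
  · funext i; exact congrFun h (i + 1)

/-- Derivation is sound for the existential suffix implication:
`a·w ⊨ R ⟨ φ` iff (`a ∈ L(R)` and `a·w ⊨ φ`) or `w ⊨ leaf(δ(R),a) ⟨ φ`. -/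
theorem eimpl_derive {D P : Type*} (E : EBA D P) (R : ERE P) (φ : RLTL P)
    (a : D) (w : ℕ → D) :
    RLTLsat E.den (consInf a w) (.eimpl R φ) ↔
      (([a] ∈ lang E.den R ∧ RLTLsat E.den (consInf a w) φ) ∨
       RLTLsat E.den w (.eimpl (leafOf E (derive E R) a) φ)) := by
  simp only [RLTLsat]
  constructor
  · rintro ⟨u, v, heq, hlang, hsat⟩
    rcases u with _ | ⟨b, u'⟩
    · left
      simp only [appendInf] at heq
      subst heq
      simp only [List.nil_append] at hlang
      have h0 : consInf a w 0 = a := rfl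
      rw [h0] at hlang
      exact ⟨hlang, hsat⟩
    · right
      have heq' : consInf a w = consInf b (appendInf u' v) := heq
      obtain ⟨rfl, rfl⟩ := consInf_inj heq'
      refine ⟨u', v, rfl, ?_, hsat⟩
      exact (derive_correct E a R (u' ++ [v 0])).mpr hlang
  · rintro (⟨hlang, hsat⟩ | ⟨u, v, heq, hlang, hsat⟩)
    · exact ⟨[], consInf a w, rfl, by simp only [List.nil_append]; exact hlang, hsat⟩
    · refine ⟨a :: u, v, by simp [appendInf, heq], ?_, hsat⟩
      have := (derive_correct E a R (u ++ [v 0])).mp hlang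
      simpa using this
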